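/- Let P be a two-user q-ary input multiple-access channel (q prime). Then I⁽¹⁾(P⁻) + I⁽¹⁾(P⁺) ≤ 2 I⁽¹⁾(P) and I⁽²⁾(P⁻) + I⁽²⁾(P⁺) ≤ 2 I⁽²⁾(P). -/

import Mathlib

open Finset

namespace PolarMAC

/-- A two-user `q`-ary input multiple-access channel: an arbitrary finite output
alphabet `Y` together with transition probabilities `P x w y = P(y | x, w)`. -/
structure MAC (q : ℕ) where
  Y : Type
  [fintypeY : Fintype Y]
  P : ZMod q → ZMod q → Y → ℝ

attribute [instance] MAC.fintypeY

/-- `M` is a genuine MAC: entries nonnegative and rows summing to one. -/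
def IsMAC {q : ℕ} [Fact (Nat.Prime q)] (M : MAC q) : Prop :=
  (∀ x w y, 0 ≤ M.P x w y) ∧ ∀ x w, ∑ y, M.P x w y = 1

/-- Entropy (base `q`) of a pmf on a finite type. -/
noncomputable def Hq (q : ℕ) {α : Type*} [Fintype α] (p : α → ℝ) : ℝ :=
  ∑ a, -(p a * Real.logb q (p a))

/-- Mutual information (base `q`) between the two coordinates of a joint pmf. -/
noncomputable def MIq (q : ℕ) {α β : Type*} [Fintype α] [Fintype β] (p : α → β → ℝ) : ℝ :=
  Hq q (fun a => ∑ b, p a b) + Hq q (fun b => ∑ a, p a b) - Hq q (fun ab : α × β => p ab.1 ab.2)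

variable (q : ℕ) [Fact (Nat.Prime q)]

/-- `I⁽¹⁾(P) = I(X; Y W)` for independent uniform inputs. -/
noncomputable def I1 (M : MAC q) : ℝ :=
  MIq q (fun (x : ZMod q) (wy : ZMod q × M.Y) => M.P x wy.1 wy.2 / (q : ℝ) ^ 2)

/-- `I⁽²⁾(P) = I(W; Y X)` for independent uniform inputs. -/
noncomputable def I2 (M : MAC q) : ℝ :=
  MIq q (fun (w : ZMod q) (xy : ZMod q × M.Y) => M.P xy.1 w xy.2 / (q : ℝ) ^ 2)

/-- `I⁽¹²⁾(P) = I(X W; Y)` for independent uniform inputs. -/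
noncomputable def I12 (M : MAC q) : ℝ :=
  MIq q (fun (xw : ZMod q × ZMod q) (y : M.Y) => M.P xw.1 xw.2 y / (q : ℝ) ^ 2)

/-- `K(P) = (I⁽¹⁾(P), I⁽²⁾(P), I⁽¹²⁾(P)) ∈ ℝ³`, with the Euclidean norm. -/
noncomputable def Kvec (M : MAC q) : EuclideanSpace ℝ (Fin 3) :=
  WithLp.toLp 2 ![I1 q M, I2 q M, I12 q M]

/-- The transform `P⁻(y₁,y₂ | u₁,v₁) = q⁻² ∑_{u₂,v₂} P(y₁|u₁+u₂, v₁+v₂) P(y₂|u₂,v₂)`. -/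
noncomputable def minusT (M : MAC q) : MAC q where
  Y := M.Y × M.Y
  P := fun u₁ v₁ y =>
    ((q : ℝ) ^ 2)⁻¹ * ∑ u₂, ∑ v₂, M.P (u₁ + u₂) (v₁ + v₂) y.1 * M.P u₂ v₂ y.2

/-- The transform `P⁺(y₁,y₂,u₁,v₁ | u₂,v₂) = q⁻² P(y₁|u₁+u₂, v₁+v₂) P(y₂|u₂,v₂)`,
with output `((y₁, y₂), (u₁, v₁))`. -/
noncomputable def plusT (M : MAC q) : MAC q where
  Y := (M.Y × M.Y) × ZMod q × ZMod q
  P := fun u₂ v₂ z =>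
    ((q : ℝ) ^ 2)⁻¹ * (M.P (z.2.1 + u₂) (z.2.2 + v₂) z.1.1 * M.P u₂ v₂ z.1.2)


variable {q}

lemma q1R : (1:ℝ) < q := by exact_mod_cast (Fact.out : Nat.Prime q).one_lt

lemma Hq_eq_of_equiv {α β : Type*} [Fintype α] [Fintype β] (e : α ≃ β)
    {p : α → ℝ} {r : β → ℝ} (h : ∀ a, p a = r (e a)) : Hq q p = Hq q r :=
  Fintype.sum_equiv e _ _ (fun a => by rw [h])

lemma Hq_uniform : Hq q (fun _ : ZMod q => ((q:ℝ))⁻¹) = 1 := by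
  have hq : (1:ℝ) < q := q1R
  simp only [Hq, Finset.sum_const, Finset.card_univ, ZMod.card, nsmul_eq_mul]
  rw [Real.logb_inv, Real.logb_self_eq_one (by linarith)]
  field_simp

lemma Hq_prod {α β : Type*} [Fintype α] [Fintype β] (p : α → ℝ) (r : β → ℝ)
    (hp : ∀ a, 0 ≤ p a) (hr : ∀ b, 0 ≤ r b) (hps : ∑ a, p a = 1) (hrs : ∑ b, r b = 1) :
    Hq q (fun ab : α × β => p ab.1 * r ab.2) = Hq q p + Hq q r := by
  have key : ∀ a b, -(p a * r b * Real.logb q (p a * r b))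
      = r b * -(p a * Real.logb q (p a)) + p a * -(r b * Real.logb q (r b)) := by
    intro a b
    rcases eq_or_lt_of_le (hp a) with h | h
    · simp [← h]
    rcases eq_or_lt_of_le (hr b) with h' | h'
    · simp [← h']
    rw [Real.logb_mul h.ne' h'.ne']; ring
  simp only [Hq, Fintype.sum_prod_type]
  simp_rw [key, Finset.sum_add_distrib, ← Finset.mul_sum, ← Finset.sum_mul, hrs, hps]
  simp [Finset.sum_add_distrib]

lemma sum_shift (F : ZMod q → ℝ) (t : ZMod q) : ∑ x, F (x + t) = ∑ x, F x :=
  Fintype.sum_equiv (Equiv.addRight t) _ _ fun x => rfl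

lemma sum_yy {A Y₁ Y₂ : Type*} [Fintype A] [Fintype Y₁] [Fintype Y₂]
    (F : A → Y₁ → ℝ) (G : A → Y₂ → ℝ)
    (hF : ∀ a, ∑ y, F a y = 1) (hG : ∀ a, ∑ y, G a y = 1) :
    ∑ y₁, ∑ y₂, ∑ a, F a y₁ * G a y₂ = (Fintype.card A : ℝ) := by
  have h1 : ∀ y₁, ∑ y₂, ∑ a, F a y₁ * G a y₂ = ∑ a, F a y₁ := by
    intro y₁
    rw [Finset.sum_comm]
    exact Finset.sum_congr rfl fun a _ => by rw [← Finset.mul_sum, hG, mul_one]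
  simp_rw [h1]
  rw [Finset.sum_comm]
  simp [hF, Finset.card_univ]

lemma sum_PP (M : MAC q) (hM : IsMAC M) (u₁ v₁ : ZMod q) :
    ∑ y₁ : M.Y, ∑ y₂ : M.Y, ∑ u₂ : ZMod q, ∑ v₂ : ZMod q,
      M.P (u₁ + u₂) (v₁ + v₂) y₁ * M.P u₂ v₂ y₂ = (q:ℝ)^2 := by
  have h := sum_yy (A := ZMod q × ZMod q)
      (F := fun a y => M.P (u₁ + a.1) (v₁ + a.2) y) (G := fun a y => M.P a.1 a.2 y)
      (fun a => hM.2 _ _) (fun a => hM.2 _ _)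
  simp only [Fintype.sum_prod_type] at h
  rw [h]
  have : (1:ℝ) < q := q1R
  simp [ZMod.card]
  ring

lemma sum_PP2 (M : MAC q) (hM : IsMAC M) (u₂ v₂ : ZMod q) :
    ∑ y₁ : M.Y, ∑ y₂ : M.Y, ∑ u₁ : ZMod q, ∑ v₁ : ZMod q,
      M.P (u₁ + u₂) (v₁ + v₂) y₁ * M.P u₂ v₂ y₂ = (q:ℝ)^2 := by
  have h := sum_yy (A := ZMod q × ZMod q)
      (F := fun a y => M.P (a.1 + u₂) (a.2 + v₂) y) (G := fun _ y => M.P u₂ v₂ y)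
      (fun a => hM.2 _ _) (fun _ => hM.2 _ _)
  simp only [Fintype.sum_prod_type] at h
  rw [h]
  simp [ZMod.card]
  ring

lemma MIq_comp_right {α β β' : Type*} [Fintype α] [Fintype β] [Fintype β']
    (e : β ≃ β') (p : α → β' → ℝ) :
    MIq q (fun a b => p a (e b)) = MIq q p := by
  unfold MIq
  have h1 : (fun a => ∑ b, p a (e b)) = fun a => ∑ b', p a b' :=
    funext fun a => Fintype.sum_equiv e _ _ fun b => rfl
  have h2 : Hq q (fun b => ∑ a, p a (e b)) = Hq q (fun b' => ∑ a, p a b') :=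
    Hq_eq_of_equiv e fun b => rfl
  have h3 : Hq q (fun ab : α × β => p ab.1 (e ab.2)) = Hq q (fun ab : α × β' => p ab.1 ab.2) :=
    Hq_eq_of_equiv ((Equiv.refl α).prodCongr e) fun ab => rfl
  rw [h1, h2, h3]

lemma submod {α β γ : Type*} [Fintype α] [Fintype β] [Fintype γ]
    (f : α → β → γ → ℝ) (hf : ∀ a b c, 0 ≤ f a b c)
    (hsum : ∑ a, ∑ b, ∑ c, f a b c = 1) :
    Hq q (fun b => ∑ a, ∑ c, f a b c) + Hq q (fun x : α × β × γ => f x.1 x.2.1 x.2.2)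
      ≤ Hq q (fun ab : α × β => ∑ c, f ab.1 ab.2 c)
        + Hq q (fun bc : β × γ => ∑ a, f a bc.1 bc.2) := by
  classical
  have hlq : 0 < Real.log q := Real.log_pos q1R
  have point : ∀ a b c,
      f a b c * Real.logb q (∑ c', f a b c') + f a b c * Real.logb q (∑ a', f a' b c)
        - f a b c * Real.logb q (f a b c) - f a b c * Real.logb q (∑ a', ∑ c', f a' b c')
      ≤ ((∑ c', f a b c') * (∑ a', f a' b c) * (∑ a', ∑ c', f a' b c')⁻¹ - f a b c)
          / Real.log q := by
    intro a b c
    set p : ℝ := f a b c with hp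
    set sAB : ℝ := ∑ c', f a b c' with hsAB
    set sBC : ℝ := ∑ a', f a' b c with hsBC
    set sB : ℝ := ∑ a', ∑ c', f a' b c' with hsB
    have hABn : 0 ≤ sAB := Finset.sum_nonneg fun c' _ => hf a b c'
    have hBCn : 0 ≤ sBC := Finset.sum_nonneg fun a' _ => hf a' b c
    have hBn : 0 ≤ sB := Finset.sum_nonneg fun a' _ => Finset.sum_nonneg fun c' _ => hf a' b c'
    rcases eq_or_lt_of_le (hf a b c) with h0 | h0
    · rw [hp, ← h0]
      simp only [zero_mul, add_zero, zero_add, sub_zero, sub_self]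
      apply div_nonneg _ hlq.le
      exact mul_nonneg (mul_nonneg hABn hBCn) (inv_nonneg.2 hBn)
    · rw [← hp] at h0
      have hab : 0 < sAB :=
        lt_of_lt_of_le h0 (Finset.single_le_sum (fun c' _ => hf a b c') (Finset.mem_univ c))
      have hbc : 0 < sBC :=
        lt_of_lt_of_le h0 (Finset.single_le_sum (fun a' _ => hf a' b c) (Finset.mem_univ a))
      have hb : 0 < sB := lt_of_lt_of_le hab
        (Finset.single_le_sum (f := fun a' => ∑ c', f a' b c')
          (fun a' _ => Finset.sum_nonneg fun c' _ => hf a' b c') (Finset.mem_univ a))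
      set X : ℝ := sAB * sBC / (p * sB) with hX
      have hXpos : 0 < X := div_pos (mul_pos hab hbc) (mul_pos h0 hb)
      have hlogX : Real.logb q X = Real.logb q sAB + Real.logb q sBC
          - Real.logb q p - Real.logb q sB := by
        rw [hX, Real.logb_div (mul_pos hab hbc).ne' (mul_pos h0 hb).ne',
          Real.logb_mul hab.ne' hbc.ne', Real.logb_mul h0.ne' hb.ne']
        ring
      have h1 : p * Real.log X ≤ p * (X - 1) :=
        mul_le_mul_of_nonneg_left (Real.log_le_sub_one_of_pos hXpos) h0.le
      have h2 : p * (X - 1) = sAB * sBC * sB⁻¹ - p := by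
        rw [hX]; field_simp
      calc p * Real.logb q sAB + p * Real.logb q sBC
            - p * Real.logb q p - p * Real.logb q sB
          = p * Real.logb q X := by rw [hlogX]; ring
        _ = p * Real.log X / Real.log q := by rw [Real.logb, mul_div_assoc]
        _ ≤ (sAB * sBC * sB⁻¹ - p) / Real.log q := by
            rw [div_le_div_iff_of_pos_right hlq]; exact h1.trans_eq h2
  -- summed bound
  have hsum2 : ∑ a, ∑ b, ∑ c,
      (f a b c * Real.logb q (∑ c', f a b c') + f a b c * Real.logb q (∑ a', f a' b c)
        - f a b c * Real.logb q (f a b c) - f a b c * Real.logb q (∑ a', ∑ c', f a' b c'))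
      ≤ ∑ a, ∑ b, ∑ c,
        ((∑ c', f a b c') * (∑ a', f a' b c) * (∑ a', ∑ c', f a' b c')⁻¹ - f a b c)
          / Real.log q :=
    Finset.sum_le_sum fun a _ => Finset.sum_le_sum fun b _ =>
      Finset.sum_le_sum fun c _ => point a b c
  have hXsum : ∑ a, ∑ b, ∑ c,
      (∑ c', f a b c') * (∑ a', f a' b c) * (∑ a', ∑ c', f a' b c')⁻¹ ≤ 1 := by
    rw [Finset.sum_comm]
    have inner : ∀ b, ∑ a, ∑ c,
        (∑ c', f a b c') * (∑ a', f a' b c) * (∑ a', ∑ c', f a' b c')⁻¹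
        = (∑ a', ∑ c', f a' b c') * ((∑ a', ∑ c', f a' b c') * (∑ a', ∑ c', f a' b c')⁻¹) := by
      intro b
      simp_rw [mul_assoc, ← Finset.mul_sum, ← Finset.sum_mul]
      rw [show (∑ c, (∑ a', f a' b c)) = ∑ a', ∑ c', f a' b c' from Finset.sum_comm]
    calc ∑ b, ∑ a, ∑ c, (∑ c', f a b c') * (∑ a', f a' b c) * (∑ a', ∑ c', f a' b c')⁻¹
        = ∑ b, (∑ a', ∑ c', f a' b c') * ((∑ a', ∑ c', f a' b c') * (∑ a', ∑ c', f a' b c')⁻¹) := by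
          exact Finset.sum_congr rfl fun b _ => inner b
      _ ≤ ∑ b, ∑ a', ∑ c', f a' b c' := by
          refine Finset.sum_le_sum fun b _ => ?_
          rcases eq_or_lt_of_le (Finset.sum_nonneg fun a' (_ : a' ∈ Finset.univ) =>
            Finset.sum_nonneg fun c' _ => hf a' b c') with h | h
          · rw [← h]; simp
          · rw [mul_inv_cancel₀ h.ne', mul_one]
      _ = 1 := Finset.sum_comm.trans hsum
  have hRHS : ∑ a, ∑ b, ∑ c,
      ((∑ c', f a b c') * (∑ a', f a' b c) * (∑ a', ∑ c', f a' b c')⁻¹ - f a b c)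
        / Real.log q ≤ 0 := by
    have h1 : ∑ a, ∑ b, ∑ c,
        ((∑ c', f a b c') * (∑ a', f a' b c) * (∑ a', ∑ c', f a' b c')⁻¹ - f a b c) ≤ 0 := by
      simp only [Finset.sum_sub_distrib]
      rw [hsum]
      linarith [hXsum]
    simp_rw [div_eq_mul_inv, ← Finset.sum_mul]
    exact mul_nonpos_iff.mpr (Or.inr ⟨h1, inv_nonneg.2 hlq.le⟩)
  have final := hsum2.trans hRHS
  -- expansions of the four entropies
  have eB : Hq q (fun b => ∑ a, ∑ c, f a b c)
      = ∑ a, ∑ b, ∑ c, -(f a b c * Real.logb q (∑ a', ∑ c', f a' b c')) := by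
    unfold Hq
    rw [Finset.sum_comm]
    refine Finset.sum_congr rfl fun b _ => ?_
    rw [show (∑ a, ∑ c, f a b c) * Real.logb q (∑ a, ∑ c, f a b c)
        = ∑ a, ∑ c, f a b c * Real.logb q (∑ a', ∑ c', f a' b c') by
      simp_rw [Finset.sum_mul]]
    simp [Finset.sum_neg_distrib]
  have eF : Hq q (fun x : α × β × γ => f x.1 x.2.1 x.2.2)
      = ∑ a, ∑ b, ∑ c, -(f a b c * Real.logb q (f a b c)) := by
    unfold Hq
    simp only [Fintype.sum_prod_type]
  have eAB : Hq q (fun ab : α × β => ∑ c, f ab.1 ab.2 c)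
      = ∑ a, ∑ b, ∑ c, -(f a b c * Real.logb q (∑ c', f a b c')) := by
    unfold Hq
    rw [Fintype.sum_prod_type]
    refine Finset.sum_congr rfl fun a _ => Finset.sum_congr rfl fun b _ => ?_
    rw [show (∑ c, f a b c) * Real.logb q (∑ c, f a b c)
        = ∑ c, f a b c * Real.logb q (∑ c', f a b c') by simp_rw [Finset.sum_mul]]
    simp [Finset.sum_neg_distrib]
  have eBC : Hq q (fun bc : β × γ => ∑ a, f a bc.1 bc.2)
      = ∑ a, ∑ b, ∑ c, -(f a b c * Real.logb q (∑ a', f a' b c)) := by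
    unfold Hq
    rw [Fintype.sum_prod_type]
    have reorder : ∑ a, ∑ b, ∑ c, -(f a b c * Real.logb q (∑ a', f a' b c))
        = ∑ b, ∑ c, ∑ a, -(f a b c * Real.logb q (∑ a', f a' b c)) := by
      rw [Finset.sum_comm]
      exact Finset.sum_congr rfl fun b _ => Finset.sum_comm
    rw [reorder]
    refine Finset.sum_congr rfl fun b _ => Finset.sum_congr rfl fun c _ => ?_
    rw [show (∑ a, f a b c) * Real.logb q (∑ a, f a b c)
        = ∑ a, f a b c * Real.logb q (∑ a', f a' b c) by simp_rw [Finset.sum_mul]]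
    simp [Finset.sum_neg_distrib]
  have split : ∑ a, ∑ b, ∑ c,
      (f a b c * Real.logb q (∑ c', f a b c') + f a b c * Real.logb q (∑ a', f a' b c)
        - f a b c * Real.logb q (f a b c) - f a b c * Real.logb q (∑ a', ∑ c', f a' b c'))
      = (∑ a, ∑ b, ∑ c, f a b c * Real.logb q (∑ c', f a b c'))
        + (∑ a, ∑ b, ∑ c, f a b c * Real.logb q (∑ a', f a' b c))
        - (∑ a, ∑ b, ∑ c, f a b c * Real.logb q (f a b c))
        - (∑ a, ∑ b, ∑ c, f a b c * Real.logb q (∑ a', ∑ c', f a' b c')) := by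
    simp only [Finset.sum_add_distrib, Finset.sum_sub_distrib]
  rw [eB, eF, eAB, eBC]
  simp only [Finset.sum_neg_distrib]
  linarith [final, split]

lemma keyI1 (M : MAC q) (hM : IsMAC M) :
    I1 q (minusT q M) + I1 q (plusT q M) ≤ 2 * I1 q M := by
  obtain ⟨hP0, hP1⟩ := hM
  have hq1 : (1:ℝ) < q := q1R
  have hq0 : (0:ℝ) < q := by linarith
  set ν : ZMod q × ZMod q × M.Y → ℝ := fun t => M.P t.1 t.2.1 t.2.2 / (q:ℝ)^2 with hν
  set ρ : ZMod q × M.Y → ℝ := fun wy => ∑ x, M.P x wy.1 wy.2 / (q:ℝ)^2 with hρ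
  set g : ZMod q → ZMod q × M.Y × M.Y → ZMod q → ℝ :=
    fun a b c => (((q:ℝ)^2)⁻¹ * ∑ u₂, M.P (a + u₂) (b.1 + c) b.2.1 * M.P u₂ c b.2.2) / (q:ℝ)^2
    with hg
  have hgnn : ∀ a b c, 0 ≤ g a b c := by
    intro a b c
    rw [hg]
    apply div_nonneg _ (by positivity)
    apply mul_nonneg (by positivity)
    exact Finset.sum_nonneg fun u₂ _ => mul_nonneg (hP0 _ _ _) (hP0 _ _ _)
  have hνnn : ∀ t, 0 ≤ ν t := by
    intro t; rw [hν]; exact div_nonneg (hP0 _ _ _) (by positivity)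
  have hρnn : ∀ t, 0 ≤ ρ t := by
    intro t; rw [hρ]
    exact Finset.sum_nonneg fun x _ => div_nonneg (hP0 _ _ _) (by positivity)
  have hνsum : ∑ t, ν t = 1 := by
    rw [hν]
    simp only [Fintype.sum_prod_type, div_eq_mul_inv, ← Finset.sum_mul]
    simp_rw [hP1]
    simp only [Finset.sum_const, Finset.card_univ, ZMod.card, nsmul_eq_mul, mul_one]
    field_simp
  have hρsum : ∑ t, ρ t = 1 := by
    rw [hρ]
    have hswapw : ∀ w : ZMod q, ∑ y : M.Y, ∑ x, M.P x w y = (q:ℝ) := by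
      intro w
      rw [Finset.sum_comm]
      simp_rw [hP1]
      simp [Finset.card_univ, ZMod.card]
    simp only [Fintype.sum_prod_type, div_eq_mul_inv, ← Finset.sum_mul]
    simp_rw [hswapw]
    simp only [Finset.sum_const, Finset.card_univ, ZMod.card, nsmul_eq_mul]
    field_simp
  have hJ : ∀ (a : ZMod q) (b : ZMod q × M.Y × M.Y),
      (minusT q M).P a b.1 b.2 / (q:ℝ)^2 = ∑ c, g a b c := by
    intro a b
    simp only [minusT, hg]
    rw [← Finset.sum_div, ← Finset.mul_sum]
    congr 2
    exact Finset.sum_comm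
  have hmarg1 : ∀ a : ZMod q,
      ∑ b : ZMod q × (M.Y × M.Y), (minusT q M).P a b.1 b.2 / (q:ℝ)^2 = (q:ℝ)⁻¹ := by
    intro a
    simp only [minusT, Fintype.sum_prod_type, div_eq_mul_inv]
    simp only [← Finset.sum_mul, ← Finset.mul_sum]
    simp_rw [sum_PP M ⟨hP0, hP1⟩ a]
    simp only [Finset.sum_const, Finset.card_univ, ZMod.card, nsmul_eq_mul]
    field_simp
  have hmarg1p : ∀ a : ZMod q,
      ∑ b : ZMod q × ((M.Y × M.Y) × ZMod q × ZMod q),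
        (plusT q M).P a b.1 b.2 / (q:ℝ)^2 = (q:ℝ)⁻¹ := by
    intro a
    simp only [plusT, Fintype.sum_prod_type, div_eq_mul_inv]
    simp only [← Finset.sum_mul, ← Finset.mul_sum]
    have hinner : ∀ v₂ : ZMod q,
        (∑ y₁ : M.Y, ∑ u₁ : ZMod q, ∑ v₁ : ZMod q, M.P (u₁ + a) (v₁ + v₂) y₁) = (q:ℝ)^2 := by
      intro v₂
      rw [Finset.sum_comm]
      have h5 : ∀ u₁ : ZMod q, ∑ y₁ : M.Y, ∑ v₁ : ZMod q, M.P (u₁ + a) (v₁ + v₂) y₁ = (q:ℝ) := by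
        intro u₁
        rw [Finset.sum_comm]
        simp_rw [hP1]
        simp [Finset.card_univ, ZMod.card]
      simp_rw [h5]
      simp only [Finset.sum_const, Finset.card_univ, ZMod.card, nsmul_eq_mul]
      ring
    simp_rw [hP1, mul_one, hinner]
    simp only [Finset.sum_const, Finset.card_univ, ZMod.card, nsmul_eq_mul]
    field_simp
  have hmargIM : ∀ a : ZMod q,
      ∑ wy : ZMod q × M.Y, M.P a wy.1 wy.2 / (q:ℝ)^2 = (q:ℝ)⁻¹ := by
    intro a
    simp only [Fintype.sum_prod_type, div_eq_mul_inv, ← Finset.sum_mul]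
    simp_rw [hP1]
    simp only [Finset.sum_const, Finset.card_univ, ZMod.card, nsmul_eq_mul, mul_one]
    rw [sq]
    field_simp
  have hgsum : ∑ a, ∑ b, ∑ c, g a b c = 1 := by
    have h1 : ∀ a : ZMod q, ∑ b, ∑ c, g a b c = (q:ℝ)⁻¹ := by
      intro a
      rw [show (∑ b, ∑ c, g a b c)
          = ∑ b : ZMod q × (M.Y × M.Y), (minusT q M).P a b.1 b.2 / (q:ℝ)^2 from
        Finset.sum_congr rfl fun b _ => (hJ a b).symm]
      exact hmarg1 a
    simp_rw [h1]
    simp only [Finset.sum_const, Finset.card_univ, ZMod.card, nsmul_eq_mul]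
    field_simp
  -- equivalences
  set e₁ : ZMod q × (ZMod q × M.Y × M.Y) × ZMod q ≃ ZMod q × (M.Y × M.Y) × ZMod q × ZMod q :=
    ⟨fun x => (x.2.2, ((x.2.1.2.1, x.2.1.2.2), (x.1, x.2.1.1))),
     fun z => (z.2.2.1, ((z.2.2.2, (z.2.1.1, z.2.1.2)), z.1)),
     fun _ => rfl, fun _ => rfl⟩ with he₁
  have h₁ : ∀ x : ZMod q × (ZMod q × M.Y × M.Y) × ZMod q,
      g x.1 x.2.1 x.2.2
      = (fun b : ZMod q × ((M.Y × M.Y) × ZMod q × ZMod q) =>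
          ∑ a', (plusT q M).P a' b.1 b.2 / (q:ℝ)^2) (e₁ x) := by
    rintro ⟨u₁, ⟨v₁, y₁, y₂⟩, v₂⟩
    simp only [hg, plusT, he₁, Equiv.coe_fn_mk]
    rw [← Finset.sum_div, ← Finset.mul_sum]
  set e₂ : ZMod q × (ZMod q × ((M.Y × M.Y) × ZMod q × ZMod q))
      ≃ (ZMod q × ZMod q × M.Y) × (ZMod q × ZMod q × M.Y) :=
    ⟨fun s => ((s.2.2.2.1 + s.1, (s.2.2.2.2 + s.2.1, s.2.2.1.1)), (s.1, (s.2.1, s.2.2.1.2))),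
     fun t => (t.2.1, (t.2.2.1, ((t.1.2.2, t.2.2.2), (t.1.1 - t.2.1, t.1.2.1 - t.2.2.1)))),
     fun s => by
       rcases s with ⟨u₂, v₂, ⟨y₁, y₂⟩, u₁, v₁⟩
       simp,
     fun t => by
       rcases t with ⟨⟨x₁, w₁, y₁⟩, ⟨x₂, w₂, y₂⟩⟩
       simp⟩ with he₂
  have h₂ : ∀ s : ZMod q × (ZMod q × ((M.Y × M.Y) × ZMod q × ZMod q)),
      (plusT q M).P s.1 s.2.1 s.2.2 / (q:ℝ)^2
      = (fun t : (ZMod q × ZMod q × M.Y) × (ZMod q × ZMod q × M.Y) => ν t.1 * ν t.2) (e₂ s) := by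
    rintro ⟨u₂, v₂, ⟨y₁, y₂⟩, u₁, v₁⟩
    simp only [plusT, hν, he₂, Equiv.coe_fn_mk]
    simp only [div_eq_mul_inv]
    ring
  set e₃ : (ZMod q × M.Y × M.Y) × ZMod q ≃ (ZMod q × M.Y) × (ZMod q × M.Y) :=
    ⟨fun s => ((s.1.1 + s.2, s.1.2.1), (s.2, s.1.2.2)),
     fun t => ((t.1.1 - t.2.1, (t.1.2, t.2.2)), t.2.1),
     fun s => by rcases s with ⟨⟨v₁, y₁, y₂⟩, v₂⟩; simp,
     fun t => by rcases t with ⟨⟨w₁, z₁⟩, ⟨w₂, z₂⟩⟩; simp⟩ with he₃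
  have h₃ : ∀ s : (ZMod q × M.Y × M.Y) × ZMod q,
      (fun bc : (ZMod q × M.Y × M.Y) × ZMod q => ∑ a, g a bc.1 bc.2) s
      = (fun t : (ZMod q × M.Y) × (ZMod q × M.Y) => ρ t.1 * ρ t.2) (e₃ s) := by
    rintro ⟨⟨v₁, y₁, y₂⟩, v₂⟩
    simp only [hg, hρ, he₃, Equiv.coe_fn_mk]
    have hshift : ∀ u₂ : ZMod q,
        ∑ a : ZMod q, M.P (a + u₂) (v₁ + v₂) y₁ = ∑ x, M.P x (v₁ + v₂) y₁ :=
      fun u₂ => sum_shift (fun x => M.P x (v₁ + v₂) y₁) u₂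
    rw [← Finset.sum_div, ← Finset.mul_sum, Finset.sum_comm]
    simp_rw [← Finset.sum_mul, hshift]
    rw [← Finset.mul_sum]
    simp only [← Finset.sum_div]
    simp only [div_eq_mul_inv]
    ring
  -- the three identities
  have hminusEq : I1 q (minusT q M)
      = 1 + Hq q (fun b : ZMod q × M.Y × M.Y => ∑ a, ∑ c, g a b c)
        - Hq q (fun ab : ZMod q × (ZMod q × M.Y × M.Y) => ∑ c, g ab.1 ab.2 c) := by
    show Hq q (fun a : ZMod q => ∑ b : ZMod q × (M.Y × M.Y), (minusT q M).P a b.1 b.2 / (q:ℝ)^2)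
        + Hq q (fun b : ZMod q × (M.Y × M.Y) => ∑ a, (minusT q M).P a b.1 b.2 / (q:ℝ)^2)
        - Hq q (fun ab : ZMod q × (ZMod q × (M.Y × M.Y)) =>
            (minusT q M).P ab.1 ab.2.1 ab.2.2 / (q:ℝ)^2) = _
    rw [show (fun a : ZMod q => ∑ b : ZMod q × (M.Y × M.Y),
          (minusT q M).P a b.1 b.2 / (q:ℝ)^2) = fun _ => ((q:ℝ))⁻¹ from funext hmarg1,
        Hq_uniform,
        show (fun b : ZMod q × (M.Y × M.Y) => ∑ a, (minusT q M).P a b.1 b.2 / (q:ℝ)^2)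
          = (fun b : ZMod q × M.Y × M.Y => ∑ a, ∑ c, g a b c) from
          funext fun b => Finset.sum_congr rfl fun a _ => hJ a b,
        show (fun ab : ZMod q × (ZMod q × (M.Y × M.Y)) =>
            (minusT q M).P ab.1 ab.2.1 ab.2.2 / (q:ℝ)^2)
          = (fun ab : ZMod q × (ZMod q × M.Y × M.Y) => ∑ c, g ab.1 ab.2 c) from
          funext fun ab => hJ ab.1 ab.2]
  have hplusEq : I1 q (plusT q M)
      = 1 + Hq q (fun x : ZMod q × (ZMod q × M.Y × M.Y) × ZMod q => g x.1 x.2.1 x.2.2)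
        - (Hq q ν + Hq q ν) := by
    show Hq q (fun a : ZMod q => ∑ b : ZMod q × ((M.Y × M.Y) × ZMod q × ZMod q),
          (plusT q M).P a b.1 b.2 / (q:ℝ)^2)
        + Hq q (fun b : ZMod q × ((M.Y × M.Y) × ZMod q × ZMod q) =>
            ∑ a', (plusT q M).P a' b.1 b.2 / (q:ℝ)^2)
        - Hq q (fun ab : ZMod q × (ZMod q × ((M.Y × M.Y) × ZMod q × ZMod q)) =>
            (plusT q M).P ab.1 ab.2.1 ab.2.2 / (q:ℝ)^2) = _
    rw [show (fun a : ZMod q => ∑ b : ZMod q × ((M.Y × M.Y) × ZMod q × ZMod q),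
          (plusT q M).P a b.1 b.2 / (q:ℝ)^2) = fun _ => ((q:ℝ))⁻¹ from funext hmarg1p,
        Hq_uniform,
        (Hq_eq_of_equiv e₁ h₁).symm,
        (Hq_eq_of_equiv e₂ h₂).trans (Hq_prod ν ν hνnn hνnn hνsum hνsum)]
  have hIMEq : I1 q M = 1 + Hq q ρ - Hq q ν := by
    show Hq q (fun a : ZMod q => ∑ wy : ZMod q × M.Y, M.P a wy.1 wy.2 / (q:ℝ)^2)
        + Hq q (fun wy : ZMod q × M.Y => ∑ x, M.P x wy.1 wy.2 / (q:ℝ)^2)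
        - Hq q (fun ab : ZMod q × (ZMod q × M.Y) => M.P ab.1 ab.2.1 ab.2.2 / (q:ℝ)^2) = _
    rw [show (fun a : ZMod q => ∑ wy : ZMod q × M.Y, M.P a wy.1 wy.2 / (q:ℝ)^2)
          = fun _ => ((q:ℝ))⁻¹ from funext hmargIM, Hq_uniform, hρ, hν]
  have hBCEq : Hq q (fun bc : (ZMod q × M.Y × M.Y) × ZMod q => ∑ a, g a bc.1 bc.2)
      = Hq q ρ + Hq q ρ :=
    (Hq_eq_of_equiv e₃ h₃).trans (Hq_prod ρ ρ hρnn hρnn hρsum hρsum)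
  have hsub := submod (q := q) g hgnn hgsum
  rw [hminusEq, hplusEq, hIMEq]
  linarith [hsub, hBCEq]

def swapMAC {q : ℕ} (M : MAC q) : MAC q := ⟨M.Y, fun x w y => M.P w x y⟩


/-- `I⁽¹⁾` and `I⁽²⁾` are supermartingale-decreasing under the polarization transform:
`I⁽¹⁾(P⁻) + I⁽¹⁾(P⁺) ≤ 2 I⁽¹⁾(P)` and `I⁽²⁾(P⁻) + I⁽²⁾(P⁺) ≤ 2 I⁽²⁾(P)`. -/
theorem I1_I2_supermartingale (q : ℕ) [Fact (Nat.Prime q)] (M : MAC q) (hM : IsMAC M) :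
    I1 q (minusT q M) + I1 q (plusT q M) ≤ 2 * I1 q M ∧
    I2 q (minusT q M) + I2 q (plusT q M) ≤ 2 * I2 q M := by
  refine ⟨keyI1 M hM, ?_⟩
  have hswap : IsMAC (swapMAC M) := ⟨fun x w y => hM.1 w x y, fun x w => hM.2 w x⟩
  have h2 : I2 q M = I1 q (swapMAC M) := rfl
  have hminus2 : I2 q (minusT q M) = I1 q (minusT q (swapMAC M)) := by
    show MIq q (fun w (xy : ZMod q × (M.Y × M.Y)) => (minusT q M).P xy.1 w xy.2 / (q:ℝ)^2)
       = MIq q (fun w (xy : ZMod q × (M.Y × M.Y)) =>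
           (minusT q (swapMAC M)).P w xy.1 xy.2 / (q:ℝ)^2)
    refine congrArg (MIq q) (funext fun w => funext fun xy => ?_)
    simp only [minusT, swapMAC]
    rw [Finset.sum_comm]
  have hplus2 : I2 q (plusT q M) = I1 q (plusT q (swapMAC M)) := by
    set e₄ : (ZMod q × ((M.Y × M.Y) × ZMod q × ZMod q))
        ≃ (ZMod q × ((M.Y × M.Y) × ZMod q × ZMod q)) :=
      ⟨fun b => (b.1, (b.2.1, (b.2.2.2, b.2.2.1))),
       fun b => (b.1, (b.2.1, (b.2.2.2, b.2.2.1))), fun _ => rfl, fun _ => rfl⟩ with he₄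
    show MIq q (fun w (xy : ZMod q × ((M.Y × M.Y) × ZMod q × ZMod q)) =>
           (plusT q M).P xy.1 w xy.2 / (q:ℝ)^2)
       = MIq q (fun x (wy : ZMod q × ((M.Y × M.Y) × ZMod q × ZMod q)) =>
           (plusT q (swapMAC M)).P x wy.1 wy.2 / (q:ℝ)^2)
    rw [← MIq_comp_right (e := e₄) (p := fun w (xy : ZMod q × ((M.Y × M.Y) × ZMod q × ZMod q)) =>
      (plusT q M).P xy.1 w xy.2 / (q:ℝ)^2)]
    refine congrArg (MIq q) (funext fun a => funext fun b => ?_)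
    rcases b with ⟨c, ⟨yy, α, β⟩⟩
    simp only [plusT, swapMAC, he₄, Equiv.coe_fn_mk]
  rw [h2, hminus2, hplus2]
  exact keyI1 (swapMAC M) hswap

end PolarMAC
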